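/- A real number α is amply approximable if and only if 1/α is amply approximable (for α irrational, nonzero). -/
import Mathlib


open Filter

/-- `α` is amply approximable: there is a sequence `gₙ ∈ SL(2,ℤ)` with
`|(gₙ)₂₂| → ∞` and `|(gₙ)₂₁ + α (gₙ)₂₂| · |(gₙ)₂₂| · log |(gₙ)₂₂| → 0`. -/
def AmplyApproximable (α : ℝ) : Prop :=
  ∃ g : ℕ → Matrix (Fin 2) (Fin 2) ℤ, (∀ n, (g n).det = 1) ∧
    Tendsto (fun n => |((g n 1 1 : ℤ) : ℝ)|) atTop atTop ∧
    Tendsto (fun n =>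
        |((g n 1 0 : ℤ) : ℝ) + α * ((g n 1 1 : ℤ) : ℝ)| * |((g n 1 1 : ℤ) : ℝ)| *
          Real.log |((g n 1 1 : ℤ) : ℝ)|)
      atTop (nhds 0)

lemma amplyApproximable_aux (α : ℝ) (hα : α ≠ 0) (h : AmplyApproximable α) :
    AmplyApproximable (1 / α) := by
  obtain ⟨g, hdet, hd, hE⟩ := h
  set c : ℕ → ℝ := fun n => ((g n 1 0 : ℤ) : ℝ) with hc_def
  set d : ℕ → ℝ := fun n => ((g n 1 1 : ℤ) : ℝ) with hd_def
  have habs : (0:ℝ) < |α| := abs_pos.mpr hα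
  -- small factor tends to 0
  have hsmall : Tendsto (fun n => |c n + α * d n|) atTop (nhds 0) := by
    have hev : ∀ᶠ n in atTop, |c n + α * d n| ≤
        |c n + α * d n| * |d n| * Real.log |d n| := by
      filter_upwards [hd.eventually_ge_atTop (Real.exp 1)] with n hn
      have h1 : (1:ℝ) ≤ Real.log |d n| := by
        rw [← Real.log_exp 1]
        exact Real.log_le_log (Real.exp_pos 1) hn
      have h2 : (1:ℝ) ≤ |d n| := le_trans (by
        nlinarith [Real.add_one_le_exp (1:ℝ)]) hn
      calc |c n + α * d n| = |c n + α * d n| * 1 * 1 := by ring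
      _ ≤ |c n + α * d n| * |d n| * Real.log |d n| := by
          gcongr <;> positivity
    exact tendsto_of_tendsto_of_tendsto_of_le_of_le' tendsto_const_nhds hE
      (Eventually.of_forall fun n => abs_nonneg _) hev
  have hsmall1 : ∀ᶠ n in atTop, |c n + α * d n| < 1 :=
    hsmall.eventually (gt_mem_nhds one_pos)
  have hαd : Tendsto (fun n => |α| * |d n|) atTop atTop :=
    hd.const_mul_atTop habs
  -- |c| → ∞
  have hctend : Tendsto (fun n => |c n|) atTop atTop := by
    apply tendsto_atTop_mono' atTop (f₁ := fun n => |α| * |d n| - 1)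
    · filter_upwards [hsmall1] with n hn
      have : |α * d n| ≤ |c n + α * d n| + |c n| := by
        have := abs_add_le (c n + α * d n) (-(c n))
        simp at this
        calc |α * d n| = |c n + α * d n + -c n| := by ring_nf
        _ ≤ |c n + α * d n| + |(-(c n))| := abs_add_le _ _
        _ = |c n + α * d n| + |c n| := by rw [abs_neg]
      rw [abs_mul] at this
      linarith
    · exact tendsto_atTop_add_const_right atTop (-1) hαd
  -- eventual bounds
  have hlog : Tendsto (fun n => Real.log |d n|) atTop atTop :=
    Real.tendsto_log_atTop.comp hd
  refine ⟨fun n => !![-(g n 0 1), -(g n 0 0); g n 1 1, g n 1 0], ?_, ?_, ?_⟩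
  · intro n
    have := hdet n
    rw [Matrix.det_fin_two] at this
    rw [Matrix.det_fin_two_of]
    ring_nf
    linarith
  · simpa using hctend
  · have key : Tendsto (fun n => |d n + (1/α) * c n| * |c n| * Real.log |c n|)
        atTop (nhds 0) := by
      have hub : ∀ᶠ n in atTop, |d n + (1/α) * c n| * |c n| * Real.log |c n| ≤
          4 * (|c n + α * d n| * |d n| * Real.log |d n|) := by
        filter_upwards [hsmall1, hαd.eventually_ge_atTop 2,
          hlog.eventually_ge_atTop 1,
          hlog.eventually_ge_atTop (Real.log (2 * |α|)),
          hd.eventually_ge_atTop 1] with n h1 h2 h3 h4 h5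
        have hdpos : (0:ℝ) < |d n| := lt_of_lt_of_le one_pos h5
        have hcub : |c n| ≤ 2 * |α| * |d n| := by
          have : |c n| ≤ |c n + α * d n| + |α * d n| := by
            calc |c n| = |(c n + α * d n) + -(α * d n)| := by ring_nf
            _ ≤ |c n + α * d n| + |(-(α * d n))| := abs_add_le _ _
            _ = |c n + α * d n| + |α * d n| := by rw [abs_neg]
          rw [abs_mul] at this
          nlinarith
        have hclb : (1:ℝ) ≤ |c n| := by
          have : |α * d n| ≤ |c n + α * d n| + |c n| := by
            calc |α * d n| = |c n + α * d n + -c n| := by ring_nf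
            _ ≤ |c n + α * d n| + |(-(c n))| := abs_add_le _ _
            _ = |c n + α * d n| + |c n| := by rw [abs_neg]
          rw [abs_mul] at this
          linarith
        have hlogc : Real.log |c n| ≤ 2 * Real.log |d n| := by
          have hle : Real.log |c n| ≤ Real.log (2 * |α| * |d n|) :=
            Real.log_le_log (lt_of_lt_of_le one_pos hclb) hcub
          rw [Real.log_mul (by positivity) (ne_of_gt hdpos)] at hle
          linarith
        have hlogc0 : 0 ≤ Real.log |c n| := Real.log_nonneg hclb
        have heq : |d n + (1/α) * c n| = |c n + α * d n| * |α|⁻¹ := by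
          have : d n + (1/α) * c n = (c n + α * d n) / α := by
            field_simp; ring
          rw [this, abs_div, div_eq_mul_inv]
        rw [heq]
        have hchain : |c n + α * d n| * |α|⁻¹ * |c n| * Real.log |c n| ≤
            |c n + α * d n| * |α|⁻¹ * (2 * |α| * |d n|) * (2 * Real.log |d n|) := by
          gcongr <;> first | positivity | exact hcub | exact hlogc
        refine hchain.trans (le_of_eq ?_)
        have hinv : |α|⁻¹ * |α| = 1 := inv_mul_cancel₀ (ne_of_gt habs)
        calc |c n + α * d n| * |α|⁻¹ * (2 * |α| * |d n|) * (2 * Real.log |d n|)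
            = (|α|⁻¹ * |α|) * (4 * (|c n + α * d n| * |d n| * Real.log |d n|)) := by
              ring
          _ = 4 * (|c n + α * d n| * |d n| * Real.log |d n|) := by rw [hinv]; ring
      have hlb : ∀ᶠ n in atTop, 0 ≤ |d n + (1/α) * c n| * |c n| * Real.log |c n| := by
        filter_upwards [hctend.eventually_ge_atTop 1] with n hn
        have := Real.log_nonneg hn
        positivity
      have h4E : Tendsto (fun n => 4 * (|c n + α * d n| * |d n| * Real.log |d n|))
          atTop (nhds 0) := by
        simpa using hE.const_mul 4
      exact tendsto_of_tendsto_of_tendsto_of_le_of_le' tendsto_const_nhds h4E hlb hub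
    simpa using key

/-- An irrational nonzero `α` is amply approximable iff `1/α` is. -/
theorem amplyApproximable_inv_iff (α : ℝ) (hirr : Irrational α) (hα : α ≠ 0) :
    AmplyApproximable α ↔ AmplyApproximable (1 / α) := by
  constructor
  · exact amplyApproximable_aux α hα
  · intro h
    have := amplyApproximable_aux (1 / α) (one_div_ne_zero hα) h
    rwa [one_div_one_div] at this
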